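/- arXiv:1711.07866 — 3 statements merged into one kernel-verified Lean document; each statement's English description precedes it below -/
import Mathlib

section
/- Let $m \ge 0$ and define $c_n = \sqrt{\frac{(n+2m)(n+2m+1)}{(2n+2m-1)(2n+2m+1)}}$ and $d_n = -\sqrt{\frac{n(n+1)}{(2n+2m+1)(2n+2m+3)}}$ for $n \ge 1$. Then $c_1^2 = a_1$, $c_2^2 = a_2$, $d_n = b_n/c_n$ for all $n \ge 1$, and $c_n^2 + d_{n-2}^2 = a_n$ for all $n \ge 3$, where $a_n = \frac{2(n^2+2mn+2m^2-n-m-1)}{(2n+2m-3)(2n+2m+1)}$ and $b_n = -\sqrt{\frac{n(n+1)(n+2m)(n+2m+1)}{(2n+2m-1)(2n+2m+1)^2(2n+2m+3)}}$. Consequently, the upper bidiagonal (stride-2) matrix $\mathcal R$ with diagonal $c_n$ and second superdiagonal $d_n$ is the Cholesky factor of $\mathcal M$: $\mathcal R^\top \mathcal R = \mathcal M$. -/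
/-- Diagonal entries of the multiplication-by-`(1-x²)` operator. -/
noncomputable def aM (m n : ℕ) : ℝ :=
  2 * ((n : ℝ) ^ 2 + 2 * m * n + 2 * (m : ℝ) ^ 2 - n - m - 1) /
    ((2 * (n : ℝ) + 2 * m - 3) * (2 * (n : ℝ) + 2 * m + 1))

/-- Second off-diagonal entries of the multiplication-by-`(1-x²)` operator. -/
noncomputable def bM (m n : ℕ) : ℝ :=
  -Real.sqrt ((n : ℝ) * ((n : ℝ) + 1) * ((n : ℝ) + 2 * m) * ((n : ℝ) + 2 * m + 1) /
    ((2 * (n : ℝ) + 2 * m - 1) * (2 * (n : ℝ) + 2 * m + 1) ^ 2 * (2 * (n : ℝ) + 2 * m + 3)))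

/-- Diagonal entries of the Cholesky factor `R`. -/
noncomputable def cC (m n : ℕ) : ℝ :=
  Real.sqrt (((n : ℝ) + 2 * m) * ((n : ℝ) + 2 * m + 1) /
    ((2 * (n : ℝ) + 2 * m - 1) * (2 * (n : ℝ) + 2 * m + 1)))

/-- Second superdiagonal entries of the Cholesky factor `R`. -/
noncomputable def dC (m n : ℕ) : ℝ :=
  -Real.sqrt ((n : ℝ) * ((n : ℝ) + 1) /
    ((2 * (n : ℝ) + 2 * m + 1) * (2 * (n : ℝ) + 2 * m + 3)))

/-- The upper (stride-2) bidiagonal matrix `R` (indexed from `1`). -/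
noncomputable def Rchol (m : ℕ) (i j : ℕ) : ℝ :=
  if 1 ≤ i then (if j = i then cC m i else if j = i + 2 then dC m i else 0) else 0

/-- The symmetric pentadiagonal matrix `M` (indexed from `1`). -/
noncomputable def Mpenta (m : ℕ) (i j : ℕ) : ℝ :=
  if 1 ≤ i ∧ 1 ≤ j then
    (if i = j then aM m i else if j = i + 2 then bM m i
     else if i = j + 2 then bM m j else 0)
  else 0

/-!
Squaring removes the radicals: `c_n²` and `d_n²` are rational in `n, m`, and the radicand of `b_n`
is the product of those of `c_n` and `d_n`, so `b_n = c_n d_n` (both `b_n` and `d_n` carry the minus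
sign). The diagonal identity `c_n² + d_{n-2}² = a_n` is then an identity of rational functions; it
already covers `n = 1, 2`, where `d_{n-2}` vanishes because its radicand has the factor `n - 2` or
`n - 1`. Column `i` of `R` is supported on rows `i - 2` and `i`, so the entries of `Rᵀ R` are
`c_i² + d_{i-2}²`, `c_i d_i` and `0`.
-/

lemma two_mul_add_two_mul_sub_three_ne_zero (m n : ℕ) : (2 * (n : ℝ) + 2 * m - 3) ≠ 0 := by
  intro h
  have : ((2 * n + 2 * m : ℕ) : ℝ) = (3 : ℕ) := by push_cast; linarith
  have := Nat.cast_injective this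
  omega

lemma cC_sq {m n : ℕ} (hn : 1 ≤ n) :
    cC m n ^ 2 = ((n : ℝ) + 2 * m) * ((n : ℝ) + 2 * m + 1) /
      ((2 * (n : ℝ) + 2 * m - 1) * (2 * (n : ℝ) + 2 * m + 1)) := by
  have hn' : (1 : ℝ) ≤ n := by exact_mod_cast hn
  have hm : (0 : ℝ) ≤ m := m.cast_nonneg
  exact Real.sq_sqrt (div_nonneg (by positivity) (mul_nonneg (by linarith) (by positivity)))

lemma cC_pos {m n : ℕ} (hn : 1 ≤ n) : 0 < cC m n := by
  have hn' : (1 : ℝ) ≤ n := by exact_mod_cast hn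
  have hm : (0 : ℝ) ≤ m := m.cast_nonneg
  exact Real.sqrt_pos.mpr (div_pos (by positivity) (mul_pos (by linarith) (by positivity)))

@[simp]
lemma dC_zero (m : ℕ) : dC m 0 = 0 := by
  simp [dC]

lemma dC_sub_two_sq {m n : ℕ} (hn : 1 ≤ n) :
    dC m (n - 2) ^ 2 = ((n : ℝ) - 2) * ((n : ℝ) - 1) /
      ((2 * (n : ℝ) + 2 * m - 3) * (2 * (n : ℝ) + 2 * m - 1)) := by
  obtain rfl | hn2 := hn.eq_or_lt
  · simp
  rw [dC, neg_sq, Real.sq_sqrt (by positivity), Nat.cast_sub hn2]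
  push_cast
  ring

lemma cC_mul_dC (m n : ℕ) : cC m n * dC m n = bM m n := by
  rw [cC, dC, bM, mul_neg, ← Real.sqrt_mul' _ (by positivity)]
  congr 2
  rw [div_mul_div_comm]
  ring

lemma dC_eq_bM_div_cC {m n : ℕ} (hn : 1 ≤ n) : dC m n = bM m n / cC m n :=
  eq_div_of_mul_eq (cC_pos hn).ne' (by rw [mul_comm, cC_mul_dC])

lemma cC_sq_add_dC_sub_two_sq {m n : ℕ} (hn : 1 ≤ n) :
    cC m n ^ 2 + dC m (n - 2) ^ 2 = aM m n := by
  have hn' : (1 : ℝ) ≤ n := by exact_mod_cast hn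
  have hm : (0 : ℝ) ≤ m := m.cast_nonneg
  have h₁ : (2 * (n : ℝ) + 2 * m - 1) ≠ 0 := by linarith
  have h₂ : (2 * (n : ℝ) + 2 * m + 1) ≠ 0 := by positivity
  have h₃ := two_mul_add_two_mul_sub_three_ne_zero m n
  rw [cC_sq hn, dC_sub_two_sq hn, aM, div_add_div _ _ (mul_ne_zero h₁ h₂) (mul_ne_zero h₃ h₁),
    div_eq_div_iff (by positivity) (mul_ne_zero h₃ h₂)]
  ring

lemma Rchol_eq_zero {m k i : ℕ} (h : k = 0 ∨ (i ≠ k ∧ i ≠ k + 2)) : Rchol m k i = 0 := by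
  rcases h with rfl | ⟨h₁, h₂⟩
  · simp [Rchol]
  · simp [Rchol, h₁, h₂]

lemma Rchol_self {m k : ℕ} (hk : 1 ≤ k) : Rchol m k k = cC m k := by
  simp [Rchol, hk]

lemma Rchol_add_two {m k : ℕ} (hk : 1 ≤ k) : Rchol m k (k + 2) = dC m k := by
  simp [Rchol, hk]

lemma Rchol_sub_two_self (m i : ℕ) : Rchol m (i - 2) i = dC m (i - 2) := by
  rcases le_or_gt i 2 with hi | hi
  · rw [Nat.sub_eq_zero_of_le hi, Rchol_eq_zero (Or.inl rfl), dC_zero]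
  · obtain ⟨k, rfl⟩ : ∃ k, i = k + 2 := ⟨i - 2, by omega⟩
    rw [Nat.add_sub_cancel, Rchol_add_two (by omega)]

lemma tsum_Rchol_mul {m i : ℕ} (hi : 1 ≤ i) (j : ℕ) :
    ∑' k, Rchol m k i * Rchol m k j =
      Rchol m (i - 2) i * Rchol m (i - 2) j + Rchol m i i * Rchol m i j := by
  rw [tsum_eq_sum (s := {i - 2, i}), Finset.sum_pair (by omega)]
  intro k hk
  simp only [Finset.mem_insert, Finset.mem_singleton, not_or] at hk
  rw [Rchol_eq_zero (by omega), zero_mul]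

lemma tsum_Rchol_mul_Rchol {m i j : ℕ} (hi : 1 ≤ i) (hj : 1 ≤ j) :
    ∑' k, Rchol m k i * Rchol m k j = Mpenta m i j := by
  rw [tsum_Rchol_mul hi]
  by_cases hij : j = i
  · subst hij
    rw [Rchol_sub_two_self, Rchol_self hi, ← sq, ← sq, add_comm, cC_sq_add_dC_sub_two_sq hi]
    simp [Mpenta, hi]
  by_cases hij₂ : j = i + 2
  · subst hij₂
    rw [Rchol_eq_zero (m := m) (k := i - 2) (i := i + 2) (by omega), mul_zero, zero_add,
      Rchol_self hi, Rchol_add_two hi, cC_mul_dC]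
    simp [Mpenta, hi]
  by_cases hji₂ : i = j + 2
  · subst hji₂
    rw [Nat.add_sub_cancel, Rchol_add_two hj, Rchol_self hj, Rchol_eq_zero (i := j) (by omega),
      mul_zero, add_zero, mul_comm, cC_mul_dC]
    simp [Mpenta, hj, show j ≠ j + 2 + 2 by omega]
  · rw [Rchol_eq_zero (k := i - 2) (i := j) (by omega), Rchol_eq_zero (k := i) (i := j) (by omega)]
    simp [Mpenta, Ne.symm hij, hij₂, hji₂]

/-- the Cholesky recurrences hold, so `R` is the Cholesky factor of the
multiplication-by-`(1-x²)` operator: `Rᵀ R = M`. -/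
theorem cholesky_factor_of_M (m : ℕ) :
    (cC m 1) ^ 2 = aM m 1 ∧
    (cC m 2) ^ 2 = aM m 2 ∧
    (∀ n, 1 ≤ n → dC m n = bM m n / cC m n) ∧
    (∀ n, 3 ≤ n → (cC m n) ^ 2 + (dC m (n - 2)) ^ 2 = aM m n) ∧
    (∀ i j, 1 ≤ i → 1 ≤ j → ∑' k, Rchol m k i * Rchol m k j = Mpenta m i j) :=
  ⟨by simpa using cC_sq_add_dC_sub_two_sq (m := m) le_rfl,
    by simpa using cC_sq_add_dC_sub_two_sq (m := m) one_le_two,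
    fun _ hn => dC_eq_bM_div_cC hn,
    fun _ hn => cC_sq_add_dC_sub_two_sq (by omega),
    fun _ _ hi hj => tsum_Rchol_mul_Rchol hi hj⟩
end

section
/- Let $a_1 < a_2 < \cdots < a_{n-1}$ be real numbers, let $c \in \mathbb{R}$, and let $b_i \ne 0$ for $1 \le i \le n-1$. Define the Pick function $f(\lambda) = \lambda - c + \sum_{i=1}^{n-1}\frac{b_i^2}{a_i - \lambda}$. Then $f$ has exactly $n$ real roots $\lambda_1 < \lambda_2 < \cdots < \lambda_n$ satisfying the strict interlacing $\lambda_1 < a_1 < \lambda_2 < a_2 < \cdots < a_{n-1} < \lambda_n$, and these roots are precisely the eigenvalues of the symmetric arrowhead matrix $A = \begin{pmatrix} D & b \\ b^\top & c\end{pmatrix}$ with $D = \mathrm{diag}(a_1,\ldots,a_{n-1})$ and $b = (b_1,\ldots,b_{n-1})^\top$. -/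
open scoped Matrix

/-- The symmetric arrowhead matrix with shaft `a`, spike `b` and corner `c`. -/
noncomputable def arrowhead (m : ℕ) (a b : Fin m → ℝ) (c : ℝ) :
    Matrix (Fin (m + 1)) (Fin (m + 1)) ℝ :=
  Matrix.of fun i j =>
    if hi : (i : ℕ) < m then
      if hj : (j : ℕ) < m then (if i = j then a ⟨i, hi⟩ else 0) else b ⟨i, hi⟩
    else if hj : (j : ℕ) < m then b ⟨j, hj⟩ else c

/-!
On each of the `m + 1` open intervals cut out by the poles `a i`, the Pick function `f` is
continuous and runs from `-∞` at the left end to `+∞` at the right end, so the intermediate value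
theorem gives a root in each interval; these roots interlace the `a i`. Off the poles, the Schur
complement of the diagonal block gives `det (A - μ) = -f(μ) ∏ (a i - μ)`, so every root is an
eigenvalue. Since the characteristic polynomial has degree `m + 1`, these `m + 1` distinct
eigenvalues are all of them, and hence also all roots of `f` away from the poles.
-/

open Matrix Filter Topology Polynomial Finset

theorem Polynomial.mem_range_of_isRoot {R : Type*} [CommRing R] [IsDomain R] {n : ℕ}
    {p : R[X]} (hp : p ≠ 0) (hdeg : p.natDegree ≤ n) {f : Fin n → R}
    (hf : Function.Injective f) (hroot : ∀ k, p.IsRoot (f k)) {x : R} (hx : p.IsRoot x) :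
    x ∈ Set.range f := by
  classical
  by_contra hx'
  have hsub : (insert x (univ.image f)).val ⊆ p.roots := by
    intro y hy
    rw [mem_roots hp]
    rcases Finset.mem_insert.1 (Finset.mem_def.2 hy) with rfl | hy
    · exact hx
    · obtain ⟨k, -, rfl⟩ := Finset.mem_image.1 hy
      exact hroot k
  have hcard := card_le_degree_of_subset_roots hsub
  rw [card_insert_of_notMem (by simpa using hx'), card_image_of_injective _ hf, card_fin] at hcard
  omega

theorem Matrix.det_sub_smul_one_eq_zero_iff {n R : Type*} [Fintype n] [DecidableEq n]
    [CommRing R] (M : Matrix n n R) (μ : R) : (M - μ • 1).det = 0 ↔ M.charpoly.IsRoot μ := by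
  rw [IsRoot, eval_charpoly, ← neg_sub, det_neg, scalar_apply, smul_one_eq_diagonal]
  simp

theorem arrowhead_eq_submatrix_fromBlocks (m : ℕ) (a b : Fin m → ℝ) (c : ℝ) :
    arrowhead m a b c =
      (fromBlocks (diagonal a) (replicateCol (Fin 1) b) (replicateRow (Fin 1) b)
        (of fun _ _ => c)).submatrix finSumFinEquiv.symm finSumFinEquiv.symm := by
  ext i j
  induction i using Fin.lastCases <;> induction j using Fin.lastCases <;>
    simp [arrowhead, diagonal_apply, Fin.ext_iff]

theorem det_arrowhead (m : ℕ) {a : Fin m → ℝ} (b : Fin m → ℝ) (c : ℝ)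
    (ha : ∀ i, a i ≠ 0) :
    (arrowhead m a b c).det = (c - ∑ i, b i ^ 2 / a i) * ∏ i, a i := by
  have hdet : (diagonal a).det ≠ 0 := by simpa [det_diagonal, prod_ne_zero_iff] using ha
  have := invertibleOfIsUnitDet _ (isUnit_iff_ne_zero.2 hdet)
  have hunit : IsUnit a := Pi.isUnit_iff.2 fun i => (ha i).isUnit
  rw [arrowhead_eq_submatrix_fromBlocks, det_submatrix_equiv_self, det_fromBlocks₁₁,
    invOf_eq_nonsing_inv, inv_diagonal, det_fin_one, det_diagonal, mul_comm]
  simp [mul_apply, div_eq_mul_inv, sq, Ring.inverse, hunit, diagonal_apply, mul_right_comm]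

theorem arrowhead_sub_smul_one (m : ℕ) (a b : Fin m → ℝ) (c μ : ℝ) :
    arrowhead m a b c - μ • 1 = arrowhead m (fun i => a i - μ) b (c - μ) := by
  ext i j
  induction i using Fin.lastCases <;> induction j using Fin.lastCases <;>
    simp [arrowhead, one_apply, (Fin.castSucc_ne_last _).symm]
  split_ifs <;> simp

variable {m : ℕ}

noncomputable def pick (a b : Fin m → ℝ) (c μ : ℝ) : ℝ :=
  μ - c + ∑ i, b i ^ 2 / (a i - μ)

theorem det_arrowhead_sub_smul_one (a b : Fin m → ℝ) (c : ℝ) {μ : ℝ}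
    (hμ : ∀ i, μ ≠ a i) :
    (arrowhead m a b c - μ • 1).det = -(pick a b c μ * ∏ i, (a i - μ)) := by
  rw [arrowhead_sub_smul_one, det_arrowhead _ _ _ fun i => sub_ne_zero.2 (hμ i).symm, pick]
  ring

section Pick

variable (a b : Fin m → ℝ) (c : ℝ)

theorem continuousOn_pick : ContinuousOn (pick a b c) {μ | ∀ i, μ ≠ a i} := by
  unfold pick
  exact (continuousOn_id.sub continuousOn_const).add <| continuousOn_finsetSum _ fun i _ =>
    continuousOn_const.div (continuousOn_const.sub continuousOn_id) fun _ hμ =>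
      sub_ne_zero.2 (hμ i).symm

theorem tendsto_pick_atTop : Tendsto (pick a b c) atTop atTop := by
  have hsum : Tendsto (fun μ => ∑ i, b i ^ 2 / (a i - μ)) atTop (𝓝 0) := by
    simpa [sub_eq_add_neg] using tendsto_finsetSum univ fun i _ =>
      tendsto_const_nhds.div_atBot (tendsto_atBot_add_const_left _ (a i) tendsto_neg_atTop_atBot)
  exact (tendsto_atTop_add_const_right _ (-c) tendsto_id).atTop_add hsum

theorem tendsto_pick_atBot : Tendsto (pick a b c) atBot atBot := by
  have hsum : Tendsto (fun μ => ∑ i, b i ^ 2 / (a i - μ)) atBot (𝓝 0) := by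
    simpa [sub_eq_add_neg] using tendsto_finsetSum univ fun i _ =>
      tendsto_const_nhds.div_atTop (tendsto_atTop_add_const_left _ (a i) tendsto_neg_atBot_atTop)
  exact (tendsto_atBot_add_const_right _ (-c) tendsto_id).atBot_add hsum

variable {a}

theorem continuousAt_pick_sub_pole (ha : Function.Injective a) (j : Fin m) :
    ContinuousAt (fun μ => pick a b c μ - b j ^ 2 / (a j - μ)) (a j) := by
  have hrest : (fun μ => pick a b c μ - b j ^ 2 / (a j - μ)) =
      fun μ => μ - c + ∑ i ∈ univ.erase j, b i ^ 2 / (a i - μ) := by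
    ext μ
    rw [pick, ← add_sum_erase _ _ (mem_univ j)]
    ring
  rw [hrest]
  refine (continuousAt_id.sub continuousAt_const).add <| tendsto_finsetSum _ fun i hi =>
    continuousAt_const.div (continuousAt_const.sub continuousAt_id) ?_
  exact sub_ne_zero.2 fun h => (ne_of_mem_erase hi) (ha h)

theorem tendsto_pick_nhdsLT (ha : Function.Injective a) {j : Fin m} (hb : b j ≠ 0) :
    Tendsto (pick a b c) (𝓝[<] a j) atTop := by
  have hpole : Tendsto (fun μ => b j ^ 2 / (a j - μ)) (𝓝[<] a j) atTop := by
    have hcont : Tendsto (fun μ => a j - μ) (𝓝[<] a j) (𝓝 0) := by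
      simpa using ((continuous_sub_left (a j)).tendsto (a j)).mono_left nhdsWithin_le_nhds
    have hpos : Tendsto (fun μ => a j - μ) (𝓝[<] a j) (𝓝[>] 0) :=
      tendsto_nhdsWithin_iff.2 ⟨hcont, eventually_mem_nhdsWithin.mono fun _ hμ =>
        Set.mem_Ioi.2 (sub_pos.2 hμ)⟩
    simpa [div_eq_mul_inv] using hpos.inv_tendsto_nhdsGT_zero.const_mul_atTop (by positivity)
  exact (((continuousAt_pick_sub_pole b c ha j).tendsto.mono_left nhdsWithin_le_nhds).add_atTop
    hpole).congr fun _ => sub_add_cancel _ _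

theorem tendsto_pick_nhdsGT (ha : Function.Injective a) {j : Fin m} (hb : b j ≠ 0) :
    Tendsto (pick a b c) (𝓝[>] a j) atBot := by
  have hpole : Tendsto (fun μ => b j ^ 2 / (a j - μ)) (𝓝[>] a j) atBot := by
    have hcont : Tendsto (fun μ => a j - μ) (𝓝[>] a j) (𝓝 0) := by
      simpa using ((continuous_sub_left (a j)).tendsto (a j)).mono_left nhdsWithin_le_nhds
    have hneg : Tendsto (fun μ => a j - μ) (𝓝[>] a j) (𝓝[<] 0) :=
      tendsto_nhdsWithin_iff.2 ⟨hcont, eventually_mem_nhdsWithin.mono fun _ hμ =>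
        Set.mem_Iio.2 (sub_neg.2 hμ)⟩
    simpa [div_eq_mul_inv] using hneg.inv_tendsto_nhdsLT_zero.const_mul_atBot (by positivity)
  exact (((continuousAt_pick_sub_pole b c ha j).tendsto.mono_left nhdsWithin_le_nhds).add_atBot
    hpole).congr fun _ => sub_add_cancel _ _

end Pick

/-- The `k`-th interval between consecutive poles: `(a (k - 1), a k)`, with `a (-1) = -∞` and
`a m = +∞`. -/
def gap (a : Fin m → ℝ) (k : Fin (m + 1)) : Set ℝ :=
  {x | ∀ i, (i.castSucc < k → a i < x) ∧ (k ≤ i.castSucc → x < a i)}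

theorem gap_subset (a : Fin m → ℝ) (k : Fin (m + 1)) : gap a k ⊆ {x | ∀ i, x ≠ a i} := by
  intro x hx i
  rcases lt_or_ge i.castSucc k with h | h
  exacts [((hx i).1 h).ne', ((hx i).2 h).ne]

theorem isPreconnected_gap (a : Fin m → ℝ) (k : Fin (m + 1)) : IsPreconnected (gap a k) :=
  Set.OrdConnected.isPreconnected ⟨fun _ hx _ hy _ hz i =>
    ⟨fun h => ((hx i).1 h).trans_le hz.1, fun h => hz.2.trans_lt ((hy i).2 h)⟩⟩

theorem eventually_mem_gap_zero_atBot (a : Fin m → ℝ) : ∀ᶠ x in atBot, x ∈ gap a 0 :=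
  eventually_all.2 fun i => (eventually_lt_atBot (a i)).mono fun _ hx =>
    ⟨fun h => absurd h (Fin.not_lt_zero _), fun _ => hx⟩

theorem eventually_mem_gap_last_atTop (a : Fin m → ℝ) :
    ∀ᶠ x in atTop, x ∈ gap a (Fin.last m) :=
  eventually_all.2 fun i => (eventually_gt_atTop (a i)).mono fun _ hx =>
    ⟨fun _ => hx, fun h => absurd h (Fin.castSucc_lt_last i).not_ge⟩

theorem eventually_mem_gap_succ_nhdsGT {a : Fin m → ℝ} (ha : StrictMono a) (j : Fin m) :
    ∀ᶠ x in 𝓝[>] a j, x ∈ gap a j.succ := by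
  refine eventually_all.2 fun i => ?_
  simp only [Fin.castSucc_lt_succ_iff, Fin.succ_le_castSucc_iff]
  rcases le_or_gt i j with h | h
  · exact eventually_mem_nhdsWithin.mono fun _ hx =>
      ⟨fun _ => (ha.monotone h).trans_lt hx, fun h' => absurd h' h.not_gt⟩
  · exact (eventually_nhdsWithin_of_eventually_nhds (eventually_lt_nhds (ha h))).mono
      fun _ hx => ⟨fun h' => absurd h' h.not_ge, fun _ => hx⟩

theorem eventually_mem_gap_castSucc_nhdsLT {a : Fin m → ℝ} (ha : StrictMono a) (j : Fin m) :
    ∀ᶠ x in 𝓝[<] a j, x ∈ gap a j.castSucc := by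
  refine eventually_all.2 fun i => ?_
  simp only [Fin.castSucc_lt_castSucc_iff, Fin.castSucc_le_castSucc_iff]
  rcases lt_or_ge i j with h | h
  · exact (eventually_nhdsWithin_of_eventually_nhds (eventually_gt_nhds (ha h))).mono
      fun _ hx => ⟨fun _ => hx, fun h' => absurd h' h.not_ge⟩
  · exact eventually_mem_nhdsWithin.mono fun _ hx =>
      ⟨fun h' => absurd h' h.not_gt, fun _ => hx.trans_le (ha.monotone h)⟩

theorem exists_pick_eq_zero_mem_gap {a b : Fin m → ℝ} (c : ℝ) (ha : StrictMono a)
    (hb : ∀ i, b i ≠ 0) (k : Fin (m + 1)) : ∃ x ∈ gap a k, pick a b c x = 0 := by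
  obtain ⟨x₀, hx₀, hneg⟩ : ∃ x ∈ gap a k, pick a b c x < 0 := by
    induction k using Fin.cases with
    | zero => exact ((eventually_mem_gap_zero_atBot a).and
        ((tendsto_pick_atBot a b c).eventually_lt_atBot 0)).exists
    | succ j => exact ((eventually_mem_gap_succ_nhdsGT ha j).and
        ((tendsto_pick_nhdsGT b c ha.injective (hb j)).eventually_lt_atBot 0)).exists
  obtain ⟨x₁, hx₁, hpos⟩ : ∃ x ∈ gap a k, 0 < pick a b c x := by
    induction k using Fin.lastCases with
    | last => exact ((eventually_mem_gap_last_atTop a).and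
        ((tendsto_pick_atTop a b c).eventually_gt_atTop 0)).exists
    | cast j => exact ((eventually_mem_gap_castSucc_nhdsLT ha j).and
        ((tendsto_pick_nhdsLT b c ha.injective (hb j)).eventually_gt_atTop 0)).exists
  exact (isPreconnected_gap a k).intermediate_value hx₀ hx₁
    ((continuousOn_pick a b c).mono (gap_subset a k)) ⟨hneg.le, hpos.le⟩

/-- for a symmetric arrowhead matrix with strictly increasing shaft and
nonzero spike, the Pick function `f(λ) = λ - c + ∑ bᵢ²/(aᵢ-λ)` has exactly `n` roots,
strictly interlacing the shaft entries, and these are precisely the eigenvalues. -/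
theorem arrowhead_pick_roots_interlace (m : ℕ) (a b : Fin m → ℝ) (c : ℝ)
    (ha : StrictMono a) (hb : ∀ i, b i ≠ 0) :
    ∃ lam : Fin (m + 1) → ℝ, StrictMono lam ∧
      (∀ i : Fin m, lam i.castSucc < a i ∧ a i < lam i.succ) ∧
      (∀ μ : ℝ, (∀ i, μ ≠ a i) →
        (μ - c + ∑ i, (b i) ^ 2 / (a i - μ) = 0 ↔ ∃ k, μ = lam k)) ∧
      (∀ μ : ℝ,
        (arrowhead m a b c - μ • (1 : Matrix (Fin (m + 1)) (Fin (m + 1)) ℝ)).det = 0 ↔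
          ∃ k, μ = lam k) := by
  choose lam hgap hroot using exists_pick_eq_zero_mem_gap c ha hb
  have hinterlace (i : Fin m) : lam i.castSucc < a i ∧ a i < lam i.succ :=
    ⟨(hgap _ i).2 le_rfl, (hgap _ i).1 Fin.castSucc_lt_succ⟩
  have hmono : StrictMono lam :=
    Fin.strictMono_iff_lt_succ.2 fun i => (hinterlace i).1.trans (hinterlace i).2
  have hdet_lam (k : Fin (m + 1)) : (arrowhead m a b c - lam k • 1).det = 0 := by
    rw [det_arrowhead_sub_smul_one a b c (gap_subset a k (hgap k)), hroot k, zero_mul, neg_zero]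
  have heig (μ : ℝ) : (arrowhead m a b c - μ • 1).det = 0 ↔ ∃ k, μ = lam k := by
    refine ⟨fun h => ?_, fun ⟨k, hk⟩ => hk ▸ hdet_lam k⟩
    rw [det_sub_smul_one_eq_zero_iff] at h
    obtain ⟨k, hk⟩ := mem_range_of_isRoot (charpoly_monic _).ne_zero (by simp) hmono.injective
      (fun k => (det_sub_smul_one_eq_zero_iff _ _).1 (hdet_lam k)) h
    exact ⟨k, hk.symm⟩
  refine ⟨lam, hmono, hinterlace, fun μ hμ => ?_, heig⟩
  have hprod : ∏ i, (a i - μ) ≠ 0 := prod_ne_zero_iff.2 fun i _ => sub_ne_zero.2 (hμ i).symm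
  rw [← heig, det_arrowhead_sub_smul_one a b c hμ, neg_eq_zero, mul_eq_zero_iff_right hprod,
    pick]
end

section
/- Let $\mathcal R$ be an invertible upper triangular banded operator with bandwidth $2$ (nonzero entries only on the diagonal and first two superdiagonals), and let $\mathcal S$ be a symmetric operator that commutes with $\mathcal M = \mathcal R^\top \mathcal R$. Then $\mathcal R^{-\top}\mathcal S \mathcal R^\top = \mathcal R \mathcal S \mathcal R^{-1}$, and if moreover $\mathcal S$ is pentadiagonal, then $\mathcal R^{-\top}\mathcal S \mathcal R^\top$ is symmetric and pentadiagonal (its entries vanish beyond the second off-diagonals). -/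
open Matrix

/-- if `R` is an invertible upper triangular matrix of bandwidth `2` and
`S` is symmetric and commutes with `M = Rᵀ R`, then `R⁻ᵀ S Rᵀ = R S R⁻¹`; if moreover
`S` is pentadiagonal then `R⁻ᵀ S Rᵀ` is symmetric and pentadiagonal. -/
theorem conjugated_S_symm_banded {n : ℕ} (R S : Matrix (Fin n) (Fin n) ℝ)
    (hRinv : IsUnit R.det)
    (hRband : ∀ i j : Fin n, ((j : ℕ) < (i : ℕ) ∨ (i : ℕ) + 2 < (j : ℕ)) → R i j = 0)
    (hSsymm : S.IsSymm) (hcomm : S * (Rᵀ * R) = (Rᵀ * R) * S) :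
    (Rᵀ)⁻¹ * S * Rᵀ = R * S * R⁻¹ ∧
      ((∀ i j : Fin n, ((i : ℕ) + 2 < (j : ℕ) ∨ (j : ℕ) + 2 < (i : ℕ)) → S i j = 0) →
        ((Rᵀ)⁻¹ * S * Rᵀ).IsSymm ∧
          ∀ i j : Fin n, ((i : ℕ) + 2 < (j : ℕ) ∨ (j : ℕ) + 2 < (i : ℕ)) →
            ((Rᵀ)⁻¹ * S * Rᵀ) i j = 0) := by
  haveI : Invertible R := R.invertibleOfIsUnitDet hRinv
  have hRT : IsUnit Rᵀ.det := by simpa [Matrix.det_transpose] using hRinv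
  -- Part 1
  have hc : S * Rᵀ = Rᵀ * (R * S * R⁻¹) := by
    have h := congrArg (· * R⁻¹) hcomm
    simp only [mul_assoc] at h ⊢
    simpa [Matrix.mul_nonsing_inv R hRinv] using h
  have h1 : (Rᵀ)⁻¹ * S * Rᵀ = R * S * R⁻¹ := by
    calc (Rᵀ)⁻¹ * S * Rᵀ = (Rᵀ)⁻¹ * (S * Rᵀ) := by rw [mul_assoc]
      _ = (Rᵀ)⁻¹ * (Rᵀ * (R * S * R⁻¹)) := by rw [hc]
      _ = R * S * R⁻¹ := by
          rw [← mul_assoc, Matrix.nonsing_inv_mul Rᵀ hRT, one_mul]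
  refine ⟨h1, fun hSband => ?_⟩
  -- R⁻¹ is upper triangular
  have hRtri : R.BlockTriangular (id : Fin n → Fin n) := fun i j h => hRband i j (Or.inl h)
  have hRinvtri : R⁻¹.BlockTriangular (id : Fin n → Fin n) :=
    blockTriangular_inv_of_blockTriangular hRtri
  -- lower band vanishing for R * S * R⁻¹
  have lower : ∀ i j : Fin n, (i : ℕ) + 2 < (j : ℕ) → (R * S * R⁻¹) j i = 0 := by
    intro i j hij
    rw [Matrix.mul_apply]
    apply Finset.sum_eq_zero
    intro l _
    rcases lt_or_ge (i : ℕ) (l : ℕ) with hl | hl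
    · have hz : R⁻¹ l i = 0 := hRinvtri hl
      rw [hz, mul_zero]
    · have hz : (R * S) j l = 0 := by
        rw [Matrix.mul_apply]
        apply Finset.sum_eq_zero
        intro k _
        rcases lt_or_ge (k : ℕ) (j : ℕ) with hk | hk
        · rw [hRband j k (Or.inl hk), zero_mul]
        · rw [hSband k l (Or.inr (by omega)), mul_zero]
      rw [hz, zero_mul]
  have hsym : ((Rᵀ)⁻¹ * S * Rᵀ).IsSymm := by
    show ((Rᵀ)⁻¹ * S * Rᵀ)ᵀ = (Rᵀ)⁻¹ * S * Rᵀ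
    rw [Matrix.transpose_mul, Matrix.transpose_mul, Matrix.transpose_transpose,
      hSsymm.eq, Matrix.transpose_nonsing_inv, Matrix.transpose_transpose, h1, mul_assoc]
  refine ⟨hsym, fun i j hij => ?_⟩
  rcases hij with h | h
  · have := hsym.apply i j
    rw [← this] at *
    -- ((Rᵀ)⁻¹ * S * Rᵀ) j i ... use h1 and lower
    rw [h1]  -- may not apply after rewriting; handle directly below
    exact lower i j h
  · rw [h1]
    exact lower j i h
end
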